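/- (Lemma 3.5, existence of the pest free state in the prairie strip for the dispersal model.) Let α ∈ (0,1), k, ε1, ε2, δ1, δ2, k2, k4 > 0 and ξ > 0, and suppose s := ε1ξ/(1+αξ) − δ1 − k2 ≠ 0. Set Q̃ = δ2 + k4 + k2k4/s and assume 0 < Q̃ < ε2. Define x2* = Q̃/(ε2 − Q̃), y2* = (1 − x2*/k)(1 + x2*), and y1* = −(y2*/k4)·(ε2 x2*/(1 + x2*) − δ2 − k4). Then x2* > 0 and the point (0, y1*, x2*, y2*) is an equilibrium of the dispersal AF patch model, i.e., all four right-hand sides vanish there. -/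

import Mathlib

/-- Lemma 3.5: existence of the pest free state in the prairie strip for the
dispersal AF patch model. -/
theorem dispersal_pest_free_prairie_strip_exists
    (α ξ k ε1 ε2 δ1 δ2 k2 k4 : ℝ)
    (hα : 0 < α ∧ α < 1)
    (hk : 0 < k)
    (hε1 : 0 < ε1) (hε2 : 0 < ε2)
    (hδ1 : 0 < δ1) (hδ2 : 0 < δ2)
    (hk2 : 0 < k2) (hk4 : 0 < k4)
    (hξ : 0 < ξ)
    (s : ℝ) (hs : s = ε1 * ξ / (1 + α * ξ) - δ1 - k2) (hs0 : s ≠ 0)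
    (Qt : ℝ) (hQt : Qt = δ2 + k4 + k2 * k4 / s)
    (hQtpos : 0 < Qt) (hQtlt : Qt < ε2)
    (x2s y2s y1s : ℝ)
    (hx2s : x2s = Qt / (ε2 - Qt))
    (hy2s : y2s = (1 - x2s / k) * (1 + x2s))
    (hy1s : y1s = -(y2s / k4) * (ε2 * x2s / (1 + x2s) - δ2 - k4)) :
    0 < x2s ∧
    (0 : ℝ) * (1 - 0 / k) - 0 * y1s / (1 + 0 + α * ξ) = 0 ∧
    ε1 * (((0 : ℝ) + ξ) / (1 + 0 + α * ξ)) * y1s - δ1 * y1s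
      + k2 * (y2s - y1s) = 0 ∧
    x2s * (1 - x2s / k) - x2s * y2s / (1 + x2s) = 0 ∧
    ε2 * (x2s / (1 + x2s)) * y2s - δ2 * y2s + k4 * (y1s - y2s) = 0 := by

  have hd : 0 < ε2 - Qt := sub_pos.mpr hQtlt
  have hxpos : 0 < x2s := by rw [hx2s]; exact div_pos hQtpos hd
  have h1x : (0:ℝ) < 1 + x2s := by linarith
  have h1x0 : (1:ℝ) + x2s ≠ 0 := ne_of_gt h1x
  have hden : (0:ℝ) < 1 + α * ξ := by nlinarith [hα.1, hξ]
  have hden0 : (1:ℝ) + α * ξ ≠ 0 := ne_of_gt hden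
  -- ε2 * x2s = Qt * (1 + x2s)
  have hx2eq : x2s * (ε2 - Qt) = Qt := by
    rw [hx2s]; field_simp
  have hr : ε2 * x2s / (1 + x2s) = Qt := by
    rw [div_eq_iff h1x0]; nlinarith [hx2eq]
  -- key relation Qt - δ2 - k4 = k2*k4/s
  have hQtk : Qt - δ2 - k4 = k2 * k4 / s := by rw [hQt]; ring
  have hy1' : y1s = -(k2 * y2s) / s := by
    rw [hy1s, hr]
    rw [hQtk]
    field_simp
  refine ⟨hxpos, by ring, ?_, ?_, ?_⟩
  · -- eq 2
    have hsval : ε1 * ξ / (1 + α * ξ) = s + δ1 + k2 := by rw [hs]; ring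
    have : ε1 * ((0 + ξ) / (1 + 0 + α * ξ)) = s + δ1 + k2 := by
      rw [← hsval]; field_simp; simp
    rw [this, hy1']
    field_simp
    ring
  · -- eq 3
    rw [hy2s]; field_simp; ring
  · -- eq 4
    have h4 : ε2 * (x2s / (1 + x2s)) * y2s = Qt * y2s := by
      rw [mul_comm Qt, ← hr]; ring
    rw [h4, hy1', hQt]
    field_simp
    ring
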